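/- Let X be a semidivisible, connected, locally convex, Hausdorff topological additive commutative group, and let C ⊆ X be a nonempty convex compact set. Then C has at least one extreme point, i.e., E(C) ≠ ∅. -/

import Mathlib

/-- A subset `A` of an additive commutative monoid is convex if whenever
`m • x = m₁ • x₁ + ⋯ + mₙ • xₙ` with `xᵢ ∈ A`, positive integers `mᵢ`
and `m = m₁ + ⋯ + mₙ`, then `x ∈ A`. -/
def MConvex {X : Type*} [AddCommMonoid X] (A : Set X) : Prop :=
  ∀ (n : ℕ), 0 < n → ∀ (x : X) (xs : Fin n → X) (ms : Fin n → ℕ),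
    (∀ i, xs i ∈ A) → (∀ i, 0 < ms i) →
    (∑ i, ms i) • x = ∑ i, ms i • xs i → x ∈ A

/-- A topological additive commutative monoid is locally convex if its topology has a basis
consisting of convex sets. -/
def LocallyMConvex (X : Type*) [AddCommMonoid X] [TopologicalSpace X] : Prop :=
  ∃ B : Set (Set X), TopologicalSpace.IsTopologicalBasis B ∧ ∀ U ∈ B, MConvex U

/-- `x` is an extreme point of `A` if `x ∈ A` and whenever
`m • x = m₁ • x₁ + ⋯ + mₙ • xₙ` with `xᵢ ∈ A`, positive integers `mᵢ`
and `m = m₁ + ⋯ + mₙ`, then `x₁ = ⋯ = xₙ = x`. -/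
def MExtreme {X : Type*} [AddCommMonoid X] (A : Set X) (x : X) : Prop :=
  x ∈ A ∧ ∀ (n : ℕ), 0 < n → ∀ (xs : Fin n → X) (ms : Fin n → ℕ),
    (∀ i, xs i ∈ A) → (∀ i, 0 < ms i) →
    (∑ i, ms i) • x = ∑ i, ms i • xs i → ∀ i, xs i = x


open Set

section
variable {X : Type*} [AddCommGroup X]

def sumsOf (U : Set X) (a : ℕ) : Set X := {x | ∃ f : Fin a → X, (∀ i, f i ∈ U) ∧ x = ∑ i, f i}

lemma zero_mem_sumsOf (U : Set X) : (0:X) ∈ sumsOf U 0 :=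
  ⟨fun _ => 0, fun i => i.elim0, by simp⟩

lemma mem_sumsOf_one {U : Set X} {x : X} (hx : x ∈ U) : x ∈ sumsOf U 1 :=
  ⟨fun _ => x, fun _ => hx, by simp⟩

lemma add_mem_sumsOf {U : Set X} {x y : X} {a b : ℕ} (hx : x ∈ sumsOf U a)
    (hy : y ∈ sumsOf U b) : x + y ∈ sumsOf U (a + b) := by
  obtain ⟨f, hf, rfl⟩ := hx
  obtain ⟨g, hg, rfl⟩ := hy
  refine ⟨Fin.append f g, ?_, ?_⟩
  · intro i
    induction i using Fin.addCases with
    | left i => simpa using hf i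
    | right i => simpa using hg i
  · rw [Fin.sum_univ_add]
    simp

lemma nsmul_mem_sumsOf {U : Set X} {x : X} {a : ℕ} (hx : x ∈ sumsOf U a) (k : ℕ) :
    k • x ∈ sumsOf U (k * a) := by
  induction k with
  | zero => simpa using zero_mem_sumsOf U
  | succ n ih =>
      have : (n + 1) • x = n • x + x := by rw [add_nsmul, one_nsmul]
      rw [this, Nat.succ_mul]
      exact add_mem_sumsOf ih hx

lemma MConvex.mem_of_nsmul_mem_sumsOf {U : Set X} (hU : MConvex U) (h0 : (0:X) ∈ U)
    {a b : ℕ} (hb : 0 < b) (hab : a ≤ b) {x : X} (hx : b • x ∈ sumsOf U a) : x ∈ U := by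
  obtain ⟨f, hf, hsum⟩ := hx
  rcases eq_or_lt_of_le hab with rfl | hlt
  · refine hU a hb x f (fun _ => 1) hf (fun _ => one_pos) ?_
    simpa using hsum
  · refine hU (a+1) (Nat.succ_pos _) x (Fin.snoc f 0) (Fin.snoc (fun _ => 1) (b - a))
      ?_ ?_ ?_
    · intro i
      induction i using Fin.lastCases with
      | last => simpa using h0
      | cast i => simpa using hf i
    · intro i
      induction i using Fin.lastCases with
      | last => simpa using Nat.sub_pos_of_lt hlt
      | cast i => simp
    · have h1 : (∑ i : Fin (a+1), Fin.snoc (fun _ => (1:ℕ)) (b - a) i) = b := by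
        rw [Fin.sum_univ_castSucc]
        simp [Nat.add_sub_cancel' (le_of_lt hlt)]
      have h2 : (∑ i : Fin (a+1), (Fin.snoc (fun _ => (1:ℕ)) (b - a) : Fin (a+1) → ℕ) i •
          (Fin.snoc f (0:X) : Fin (a+1) → X) i) = ∑ i, f i := by
        rw [Fin.sum_univ_castSucc]
        simp
      rw [h1, h2, hsum]
end
section Absorb
variable {X : Type*} [AddCommGroup X] [TopologicalSpace X] [IsTopologicalAddGroup X]
  [ConnectedSpace X]

lemma absorbing {U : Set X} (hUo : IsOpen U) (h0 : (0:X) ∈ U) (x : X) :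
    ∃ a b : ℕ, 0 < b ∧ b • x ∈ sumsOf U a := by
  set H : Set X := {x | ∃ a b : ℕ, 0 < b ∧ b • x ∈ sumsOf U a} with hH
  have hH0 : (0:X) ∈ H := ⟨0, 1, one_pos, by simpa using zero_mem_sumsOf U⟩
  have hHadd : ∀ {x y : X}, x ∈ H → y ∈ H → x + y ∈ H := by
    rintro x y ⟨a, b, hb, hx⟩ ⟨a', b', hb', hy⟩
    refine ⟨b' * a + b * a', b * b', Nat.mul_pos hb hb', ?_⟩
    have he : (b * b') • (x + y) = b' • (b • x) + b • (b' • y) := by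
      rw [smul_add, smul_smul, smul_smul, mul_comm b' b]
    rw [he]
    exact add_mem_sumsOf (nsmul_mem_sumsOf hx b') (nsmul_mem_sumsOf hy b)
  have hUH : ∀ u ∈ U, u ∈ H := fun u hu => ⟨1, 1, one_pos, by simpa using mem_sumsOf_one hu⟩
  have hHopen : IsOpen H := by
    rw [isOpen_iff_mem_nhds]
    intro z hz
    rw [mem_nhds_iff]
    refine ⟨{y | y - z ∈ U}, ?_, ?_, ?_⟩
    · intro y hy
      have : y = z + (y - z) := by abel
      rw [this]
      exact hHadd hz (hUH _ hy)
    · exact (continuous_sub_right z).isOpen_preimage U hUo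
    · simpa using h0
  let K : AddSubgroup X :=
  { carrier := {z | z ∈ H ∧ -z ∈ H}
    zero_mem' := ⟨hH0, by simpa using hH0⟩
    add_mem' := by
      rintro p q ⟨hp1, hp2⟩ ⟨hq1, hq2⟩
      refine ⟨hHadd hp1 hq1, ?_⟩
      rw [neg_add]
      exact hHadd hp2 hq2
    neg_mem' := by
      rintro p ⟨hp1, hp2⟩
      exact ⟨hp2, by simpa using hp1⟩ }
  have hKopen : IsOpen (K : Set X) := by
    have : (K : Set X) = H ∩ (fun z : X => -z) ⁻¹' H := rfl
    rw [this]
    exact hHopen.inter (continuous_neg.isOpen_preimage H hHopen)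
  have hKclosed : IsClosed (K : Set X) := K.isClosed_of_isOpen hKopen
  have hKuniv : (K : Set X) = Set.univ :=
    IsClopen.eq_univ ⟨hKclosed, hKopen⟩ ⟨0, K.zero_mem⟩
  have : x ∈ (K : Set X) := hKuniv ▸ Set.mem_univ x
  exact this.1

end Absorb

section Mu
variable {X : Type*} [AddCommGroup X]

def ratios (U : Set X) (x : X) : Set ℝ :=
  {r | ∃ a b : ℕ, 0 < b ∧ b • x ∈ sumsOf U a ∧ r = (a : ℝ) / b}

noncomputable def mu (U : Set X) (x : X) : ℝ := sInf (ratios U x)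

lemma ratios_bddBelow (U : Set X) (x : X) : BddBelow (ratios U x) := by
  refine ⟨0, ?_⟩
  rintro r ⟨a, b, hb, _, rfl⟩
  positivity

lemma mu_nonneg (U : Set X) (x : X) : 0 ≤ mu U x := by
  apply Real.sInf_nonneg
  rintro r ⟨a, b, hb, _, rfl⟩
  positivity

lemma mu_le {U : Set X} {x : X} {r : ℝ} (h : r ∈ ratios U x) : mu U x ≤ r :=
  csInf_le (ratios_bddBelow U x) h

lemma mu_zero (U : Set X) : mu U 0 = 0 := by
  refine le_antisymm (mu_le ⟨0, 1, one_pos, by simpa using zero_mem_sumsOf U, by simp⟩)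
    (mu_nonneg U 0)

lemma ratios_add {U : Set X} {x y : X} {r s : ℝ} (hr : r ∈ ratios U x)
    (hs : s ∈ ratios U y) : r + s ∈ ratios U (x + y) := by
  obtain ⟨a, b, hb, hx, rfl⟩ := hr
  obtain ⟨a', b', hb', hy, rfl⟩ := hs
  refine ⟨b' * a + b * a', b * b', Nat.mul_pos hb hb', ?_, ?_⟩
  · have he : (b * b') • (x + y) = b' • (b • x) + b • (b' • y) := by
      rw [smul_add, smul_smul, smul_smul, mul_comm b' b]
    rw [he]
    exact add_mem_sumsOf (nsmul_mem_sumsOf hx b') (nsmul_mem_sumsOf hy b)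
  · have hb0 : (b:ℝ) ≠ 0 := Nat.cast_ne_zero.mpr hb.ne'
    have hb'0 : (b':ℝ) ≠ 0 := Nat.cast_ne_zero.mpr hb'.ne'
    push_cast
    field_simp

lemma mu_add_le {U : Set X} (hne : ∀ z : X, (ratios U z).Nonempty) (x y : X) :
    mu U (x + y) ≤ mu U x + mu U y := by
  refine le_of_forall_pos_le_add ?_
  intro ε hε
  obtain ⟨r, hr, hrlt⟩ := exists_lt_of_csInf_lt (hne x) (show mu U x < mu U x + ε/2 by linarith)
  obtain ⟨s, hs, hslt⟩ := exists_lt_of_csInf_lt (hne y) (show mu U y < mu U y + ε/2 by linarith)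
  have := mu_le (ratios_add hr hs)
  linarith

lemma mu_nsmul_le {U : Set X} (hne : ∀ z : X, (ratios U z).Nonempty) (x : X) (n : ℕ) :
    mu U (n • x) ≤ n * mu U x := by
  induction n with
  | zero => simp [mu_zero]
  | succ k ih =>
      have h1 : (k + 1) • x = k • x + x := by rw [add_nsmul, one_nsmul]
      have h2 := mu_add_le hne (k • x) x
      rw [h1]
      push_cast
      calc mu U (k • x + x) ≤ mu U (k • x) + mu U x := h2
        _ ≤ k * mu U x + mu U x := by linarith
        _ = (k + 1) * mu U x := by ring

lemma le_mu_of_not_mem {U : Set X} (hU : MConvex U) (h0 : (0:X) ∈ U)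
    (hne : ∀ z : X, (ratios U z).Nonempty) {d : X} (hd : d ∉ U) {n : ℕ} (hn : 0 < n) :
    (n : ℝ) ≤ mu U (n • d) := by
  apply le_csInf (hne _)
  rintro r ⟨a, b, hb, hmem, rfl⟩
  by_contra hlt
  push_neg at hlt
  have hab : a < n * b := by
    have hb0 : (0:ℝ) < (b:ℝ) := Nat.cast_pos.mpr hb
    rw [div_lt_iff₀ hb0] at hlt
    exact_mod_cast hlt
  have hmem' : (b * n) • d ∈ sumsOf U a := by
    rwa [smul_smul] at hmem
  exact hd (hU.mem_of_nsmul_mem_sumsOf h0 (Nat.mul_pos hb hn)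
    (le_of_lt (by rwa [mul_comm n b] at hab)) hmem')

lemma mu_le_one_div {U : Set X} {z : X} {b : ℕ} (hb : 0 < b) (h : b • z ∈ U) :
    mu U z ≤ 1 / (b : ℝ) := by
  have : ((1:ℕ) : ℝ) / b ∈ ratios U z := ⟨1, b, hb, mem_sumsOf_one h, rfl⟩
  simpa using mu_le this

end Mu
section HB
variable {X : Type*} [AddCommGroup X] [TopologicalSpace X] [IsTopologicalAddGroup X]
  [ConnectedSpace X]

theorem exists_additive_functional {U : Set X} (hUc : MConvex U) (hUo : IsOpen U)
    (h0 : (0:X) ∈ U) {d : X} (hd : d ∉ U) :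
    ∃ f : X →+ ℝ, (∀ x, f x ≤ mu U x) ∧ f d = 1 := by
  have hne : ∀ z : X, (ratios U z).Nonempty := by
    intro z
    obtain ⟨a, b, hb, h⟩ := absorbing hUo h0 z
    exact ⟨_, a, b, hb, h, rfl⟩
  have hmu2 : ∀ (n m : ℕ) (A B : X), mu U (n • A + m • B) ≤ n * mu U A + m * mu U B := by
    intro n m A B
    calc mu U (n • A + m • B) ≤ mu U (n • A) + mu U (m • B) := mu_add_le hne _ _
      _ ≤ _ := add_le_add (mu_nsmul_le hne _ _) (mu_nsmul_le hne _ _)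
  set 𝒮 : Set (Set (X × ℝ)) := {G | (d, (1:ℝ)) ∈ G ∧ (∀ q ∈ G, ∀ q' ∈ G, q - q' ∈ G) ∧
    ∀ q ∈ G, q.2 ≤ mu U q.1} with h𝒮
  have hseed : {q : X × ℝ | ∃ n : ℤ, q = (n • d, (n:ℝ))} ∈ 𝒮 := by
    refine ⟨⟨1, by simp⟩, ?_, ?_⟩
    · rintro q ⟨n, rfl⟩ q' ⟨m, rfl⟩
      refine ⟨n - m, ?_⟩
      rw [Prod.mk_sub_mk]
      refine Prod.ext ?_ ?_
      · rw [sub_zsmul]; abel_nf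
      · push_cast; ring
    · rintro q ⟨n, rfl⟩
      show (n:ℝ) ≤ mu U (n • d)
      rcases le_or_gt n 0 with hn | hn
      · have : (n:ℝ) ≤ 0 := by exact_mod_cast hn
        exact this.trans (mu_nonneg U _)
      · obtain ⟨k, rfl⟩ := Int.eq_ofNat_of_zero_le hn.le
        have hk : 0 < k := by exact_mod_cast hn
        rw [natCast_zsmul]
        exact_mod_cast le_mu_of_not_mem hUc h0 hne hd hk
  have hchainH : ∀ c ⊆ 𝒮, IsChain (· ⊆ ·) c → c.Nonempty →
      ∃ ub ∈ 𝒮, ∀ s ∈ c, s ⊆ ub := by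
    intro c hc𝒮 hchain hcne
    refine ⟨⋃₀ c, ⟨?_, ?_, ?_⟩, fun s hs => subset_sUnion_of_mem hs⟩
    · obtain ⟨G, hG⟩ := hcne
      exact ⟨G, hG, (hc𝒮 hG).1⟩
    · rintro q ⟨G, hG, hqG⟩ q' ⟨G', hG', hq'G'⟩
      rcases hchain.total hG hG' with h | h
      · exact ⟨G', hG', (hc𝒮 hG').2.1 _ (h hqG) _ hq'G'⟩
      · exact ⟨G, hG, (hc𝒮 hG).2.1 _ hqG _ (h hq'G')⟩
    · rintro q ⟨G, hG, hqG⟩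
      exact (hc𝒮 hG).2.2 _ hqG
  obtain ⟨M, -, hMmax⟩ := zorn_subset_nonempty 𝒮 hchainH _ hseed
  obtain ⟨hMd, hMsub, hMbd⟩ := hMmax.prop
  have h00 : ((0:X), (0:ℝ)) ∈ M := by
    have := hMsub _ hMd _ hMd
    rw [sub_self] at this
    exact this
  have hMneg : ∀ q ∈ M, -q ∈ M := by
    intro q hq
    have := hMsub _ h00 _ hq
    rwa [Prod.mk_zero_zero, zero_sub] at this
  have hMadd : ∀ q ∈ M, ∀ q' ∈ M, q + q' ∈ M := by
    intro q hq q' hq'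
    have := hMsub _ hq _ (hMneg _ hq')
    rwa [sub_neg_eq_add] at this
  have hMsmul : ∀ q ∈ M, ∀ n : ℕ, ((n • q.1, n * q.2) : X × ℝ) ∈ M := by
    rintro ⟨q1, q2⟩ hq n
    induction n with
    | zero => simpa using h00
    | succ k ih =>
        have := hMadd _ ih _ hq
        rw [Prod.mk_add_mk] at this
        have he : (((k+1:ℕ) • q1, ((k+1:ℕ):ℝ) * q2) : X × ℝ)
            = (k • q1 + q1, (k:ℝ) * q2 + q2) := by
          refine Prod.ext ?_ ?_
          · simp [succ_nsmul]
          · push_cast; ring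
        rw [he]
        exact this
  have htotal : ∀ z : X, ∃ r : ℝ, (z, r) ∈ M := by
    by_contra hmiss
    push_neg at hmiss
    obtain ⟨x, hx⟩ := hmiss
    set A : Set ℝ := {t | ∃ q ∈ M, ∃ n : ℕ, 0 < n ∧ t = (mu U (q.1 + n • x) - q.2) / n}
      with hA
    have hAne : A.Nonempty := ⟨mu U x, ((0:X),(0:ℝ)), h00, 1, one_pos, by simp⟩
    have hcross : ∀ q ∈ M, ∀ m : ℕ, 0 < m → ∀ t ∈ A,
        (q.2 - mu U (q.1 - m • x)) / m ≤ t := by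
      rintro q hq m hm t ⟨q', hq', n, hn, rfl⟩
      have hm' : (0:ℝ) < m := Nat.cast_pos.mpr hm
      have hn' : (0:ℝ) < n := Nat.cast_pos.mpr hn
      rw [div_le_div_iff₀ hm' hn']
      have hmem : ((n • q.1 + m • q'.1, n * q.2 + m * q'.2) : X × ℝ) ∈ M := by
        have := hMadd _ (hMsmul q hq n) _ (hMsmul q' hq' m)
        rwa [Prod.mk_add_mk] at this
      have hb := hMbd _ hmem
      have hident : n • q.1 + m • q'.1 = n • (q.1 - m • x) + m • (q'.1 + n • x) := by
        rw [smul_sub, smul_add, smul_smul, smul_smul, mul_comm n m]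
        abel
      have hkey : (n:ℝ) * q.2 + m * q'.2
          ≤ n * mu U (q.1 - m • x) + m * mu U (q'.1 + n • x) := by
        calc (n:ℝ) * q.2 + m * q'.2 ≤ mu U (n • q.1 + m • q'.1) := hb
          _ = mu U (n • (q.1 - m • x) + m • (q'.1 + n • x)) := by rw [hident]
          _ ≤ _ := hmu2 n m _ _
      nlinarith [hkey]
    have hAbdd : BddBelow A := by
      refine ⟨((0:ℝ) - mu U ((0:X) - 1 • x)) / 1, fun t ht => ?_⟩
      simpa using hcross ((0:X),(0:ℝ)) h00 1 one_pos t ht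
    set c := sInf A with hcdef
    have hc_le : ∀ q ∈ M, ∀ n : ℕ, 0 < n → c ≤ (mu U (q.1 + n • x) - q.2) / n :=
      fun q hq n hn => csInf_le hAbdd ⟨q, hq, n, hn, rfl⟩
    have hc_ge : ∀ q ∈ M, ∀ m : ℕ, 0 < m → (q.2 - mu U (q.1 - m • x)) / m ≤ c :=
      fun q hq m hm => le_csInf hAne (hcross q hq m hm)
    set M' : Set (X × ℝ) := {q' | ∃ q ∈ M, ∃ n : ℤ, q' = (q.1 + n • x, q.2 + n * c)}
      with hM'
    have hM'good : M' ∈ 𝒮 := by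
      refine ⟨⟨(d,1), hMd, 0, by simp⟩, ?_, ?_⟩
      · rintro _ ⟨q, hq, n, rfl⟩ _ ⟨q', hq', n', rfl⟩
        refine ⟨q - q', hMsub _ hq _ hq', n - n', ?_⟩
        rw [Prod.mk_sub_mk]
        refine Prod.ext ?_ ?_
        · show q.1 + n • x - (q'.1 + n' • x) = (q - q').1 + (n - n') • x
          rw [Prod.fst_sub, sub_zsmul]
          abel
        · show q.2 + n * c - (q'.2 + n' * c) = (q - q').2 + ((n - n' : ℤ) : ℝ) * c
          rw [Prod.snd_sub]
          push_cast
          ring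
      · rintro _ ⟨q, hq, n, rfl⟩
        show q.2 + n * c ≤ mu U (q.1 + n • x)
        rcases lt_trichotomy n 0 with hneg | rfl | hpos
        · set m := n.natAbs with hm
          have hmpos : 0 < m := by omega
          have hnm : n = -(m : ℤ) := by omega
          have h1 := hc_ge q hq m hmpos
          have hm' : (0:ℝ) < m := Nat.cast_pos.mpr hmpos
          rw [div_le_iff₀ hm'] at h1
          have e1 : q.1 + n • x = q.1 - m • x := by
            rw [hnm, neg_zsmul, natCast_zsmul]
            abel
          have e2 : ((n:ℤ):ℝ) = -(m:ℝ) := by rw [hnm]; push_cast; ring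
          rw [e1, e2]
          nlinarith [h1]
        · simpa using hMbd q hq
        · set m := n.toNat with hm
          have hmpos : 0 < m := by omega
          have hnm : n = (m : ℤ) := by omega
          have h1 := hc_le q hq m hmpos
          have hm' : (0:ℝ) < m := Nat.cast_pos.mpr hmpos
          rw [le_div_iff₀ hm'] at h1
          have e1 : q.1 + n • x = q.1 + m • x := by rw [hnm, natCast_zsmul]
          have e2 : ((n:ℤ):ℝ) = (m:ℝ) := by rw [hnm]; push_cast; ring
          rw [e1, e2]
          nlinarith [h1]
    have hMM' : M ⊆ M' := by
      intro q hq
      exact ⟨q, hq, 0, by simp⟩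
    have hsub : M' ⊆ M := hMmax.2 hM'good hMM'
    have hxc : (x, c) ∈ M := hsub ⟨((0:X),(0:ℝ)), h00, 1, by simp⟩
    exact hx c hxc
  choose F hF using htotal
  have huniq : ∀ z r, (z, r) ∈ M → r = F z := by
    intro z r hr
    have h1 := hMsub _ hr _ (hF z)
    have h2 := hMsub _ (hF z) _ hr
    have e1 : r - F z ≤ mu U 0 := by
      have := hMbd _ h1
      simpa using this
    have e2 : F z - r ≤ mu U 0 := by
      have := hMbd _ h2
      simpa using this
    rw [mu_zero] at e1 e2
    linarith
  have hadd : ∀ x y, F (x + y) = F x + F y := by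
    intro x y
    have := hMadd _ (hF x) _ (hF y)
    rw [Prod.mk_add_mk] at this
    exact (huniq _ _ this).symm
  refine ⟨AddMonoidHom.mk' F hadd, fun x => ?_, (huniq d 1 hMd).symm⟩
  exact hMbd _ (hF x)

end HB
section Cont
variable {X : Type*} [AddCommGroup X] [TopologicalSpace X] [IsTopologicalAddGroup X]

lemma continuous_of_le_mu {U : Set X} (hUo : IsOpen U) (h0 : (0:X) ∈ U)
    (f : X →+ ℝ) (hf : ∀ x, f x ≤ mu U x) : Continuous f := by
  rw [continuous_iff_continuousAt]
  intro x₀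
  rw [ContinuousAt, Metric.tendsto_nhds]
  intro ε hε
  obtain ⟨b, hb⟩ := exists_nat_gt (1/ε)
  have hbpos : 0 < b := by
    have h1 : (0:ℝ) < 1/ε := by positivity
    exact_mod_cast h1.trans hb
  have hbpos' : (0:ℝ) < b := Nat.cast_pos.mpr hbpos
  have hbe : 1 / (b:ℝ) < ε := by
    rw [div_lt_iff₀ hbpos']
    rw [div_lt_iff₀ hε] at hb
    linarith
  set W : Set X := {z | b • z ∈ U ∧ b • (-z) ∈ U} with hW
  have hWopen : IsOpen W := by
    have h1 : IsOpen {z : X | b • z ∈ U} := (continuous_nsmul b).isOpen_preimage U hUo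
    have h2 : IsOpen {z : X | b • (-z) ∈ U} :=
      ((continuous_nsmul b).comp continuous_neg).isOpen_preimage U hUo
    exact h1.inter h2
  have hW0 : (0:X) ∈ W := by simp [hW, h0]
  have hmem : {y : X | y - x₀ ∈ W} ∈ nhds x₀ := by
    refine IsOpen.mem_nhds ((continuous_sub_right x₀).isOpen_preimage W hWopen) ?_
    simpa using hW0
  filter_upwards [hmem] with y hy
  have h1 : f (y - x₀) ≤ 1 / (b:ℝ) := (hf _).trans (mu_le_one_div hbpos hy.1)
  have h2 : f (x₀ - y) ≤ 1 / (b:ℝ) := by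
    refine (hf _).trans (mu_le_one_div hbpos ?_)
    have : x₀ - y = -(y - x₀) := by abel
    rw [this]
    exact hy.2
  have hxy : f (x₀ - y) = -(f (y - x₀)) := by
    rw [← map_neg]
    congr 1
    abel
  rw [Real.dist_eq, abs_lt]
  rw [map_sub] at h1 h2
  constructor <;> linarith
end Cont
def IsFaceOf {X : Type*} [AddCommGroup X] (C F : Set X) : Prop :=
  F ⊆ C ∧ ∀ (n : ℕ), 0 < n → ∀ (x : X) (xs : Fin n → X) (ms : Fin n → ℕ),
    x ∈ F → (∀ i, xs i ∈ C) → (∀ i, 0 < ms i) →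
    (∑ i, ms i) • x = ∑ i, ms i • xs i → ∀ i, xs i ∈ F

theorem exists_extreme_point
    {X : Type*} [AddCommGroup X] [TopologicalSpace X] [IsTopologicalAddGroup X]
    [ConnectedSpace X] [T2Space X]
    (hsd : ∃ p : ℕ, p.Prime ∧ ∀ x : X, ∃ y : X, x = p • y)
    (hlc : LocallyMConvex X)
    {C : Set X} (hne : C.Nonempty) (hconv : MConvex C) (hcomp : IsCompact C) :
    ∃ x : X, MExtreme C x := by
  obtain ⟨B, hB, hBconv⟩ := hlc
  have hCclosed : IsClosed C := hcomp.isClosed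
  set 𝒮 : Set (Set X) := {F | F.Nonempty ∧ IsClosed F ∧ IsFaceOf C F} with h𝒮
  have hC𝒮 : C ∈ 𝒮 := ⟨hne, hCclosed, subset_rfl,
    fun n hn x xs ms hx hxs hms hsum i => hxs i⟩
  have hchainH : ∀ c ⊆ 𝒮, IsChain (· ⊆ ·) c → c.Nonempty →
      ∃ lb ∈ 𝒮, ∀ s ∈ c, lb ⊆ s := by
    intro c hc𝒮 hchain hcne
    have hne' : Nonempty c := hcne.to_subtype
    have hinter : (⋂ G : c, (G : Set X)).Nonempty := by
      apply IsCompact.nonempty_iInter_of_directed_nonempty_isCompact_isClosed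
      · rintro ⟨G, hG⟩ ⟨G', hG'⟩
        rcases hchain.total hG hG' with h | h
        · exact ⟨⟨G, hG⟩, subset_rfl, h⟩
        · exact ⟨⟨G', hG'⟩, h, subset_rfl⟩
      · exact fun G => (hc𝒮 G.2).1
      · exact fun G => hcomp.of_isClosed_subset (hc𝒮 G.2).2.1 (hc𝒮 G.2).2.2.1
      · exact fun G => (hc𝒮 G.2).2.1
    refine ⟨⋂₀ c, ⟨?_, ?_, ?_, ?_⟩, fun s hs => Set.sInter_subset_of_mem hs⟩
    · rwa [Set.sInter_eq_iInter]
    · exact isClosed_sInter (fun G hG => (hc𝒮 hG).2.1)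
    · obtain ⟨G, hG⟩ := hcne
      exact (Set.sInter_subset_of_mem hG).trans (hc𝒮 hG).2.2.1
    · intro n hn x xs ms hx hxs hms hsum i
      rw [Set.mem_sInter]
      intro G hG
      exact (hc𝒮 hG).2.2.2 n hn x xs ms (hx G hG) hxs hms hsum i
  obtain ⟨F, -, hFmin⟩ := zorn_superset_nonempty 𝒮 hchainH C hC𝒮
  obtain ⟨hFne, hFcl, hFC, hFface⟩ := hFmin.prop
  have hsingle : ∀ a ∈ F, ∀ b ∈ F, a = b := by
    by_contra hcon
    push_neg at hcon
    obtain ⟨a, ha, b, hb, hab⟩ := hcon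
    set d := a - b with hd
    have hd0 : d ≠ 0 := sub_ne_zero.mpr hab
    obtain ⟨U, hUB, h0U, hUsub⟩ := hB.exists_subset_of_mem_open
      (show (0:X) ∈ ({d}ᶜ : Set X) by simpa using hd0.symm) isOpen_compl_singleton
    have hdU : d ∉ U := fun h => (hUsub h) rfl
    obtain ⟨f, hfle, hfd⟩ :=
      exists_additive_functional (hBconv U hUB) (hB.isOpen hUB) h0U hdU
    have hfc : Continuous f := continuous_of_le_mu (hB.isOpen hUB) h0U f hfle
    have hFcomp : IsCompact F := hcomp.of_isClosed_subset hFcl hFC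
    obtain ⟨z₀, hz₀F, hz₀max⟩ := hFcomp.exists_isMaxOn hFne hfc.continuousOn
    set F' : Set X := {z ∈ F | f z = f z₀} with hF'
    have hF'𝒮 : F' ∈ 𝒮 := by
      refine ⟨⟨z₀, hz₀F, rfl⟩, ?_, ?_, ?_⟩
      · exact hFcl.inter (isClosed_singleton.preimage hfc)
      · exact fun z hz => hFC hz.1
      · intro n hn x xs ms hx hxs hms hsum i
        have hxsF : ∀ j, xs j ∈ F := hFface n hn x xs ms hx.1 hxs hms hsum
        refine ⟨hxsF i, ?_⟩
        have hfeq : ((∑ j, ms j : ℕ) : ℝ) * f x = ∑ j, (ms j : ℝ) * f (xs j) := by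
          have := congrArg f hsum
          rw [map_nsmul, map_sum] at this
          simpa [nsmul_eq_mul] using this
        have hle : ∀ j, f (xs j) ≤ f z₀ := fun j => hz₀max (hxsF j)
        have hall : ∀ j, f (xs j) = f z₀ := by
          by_contra hcon2
          push_neg at hcon2
          obtain ⟨j, hj⟩ := hcon2
          have hjlt : f (xs j) < f z₀ := lt_of_le_of_ne (hle j) hj
          have hstrict : ∑ j, (ms j : ℝ) * f (xs j) < ∑ j, (ms j : ℝ) * f z₀ := by
            refine Finset.sum_lt_sum (fun k _ => ?_) ⟨j, Finset.mem_univ j, ?_⟩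
            · exact mul_le_mul_of_nonneg_left (hle k) (Nat.cast_nonneg _)
            · exact mul_lt_mul_of_pos_left hjlt (Nat.cast_pos.mpr (hms j))
          have hsum2 : ∑ j, (ms j : ℝ) * f z₀ = ((∑ j, ms j : ℕ) : ℝ) * f z₀ := by
            rw [← Finset.sum_mul]
            push_cast
            ring
          rw [← hfeq, hx.2, hsum2] at hstrict
          exact lt_irrefl _ hstrict
        exact hall i
    have hFF' : F ⊆ F' := hFmin.2 hF'𝒮 (fun z hz => hz.1)
    have ha' : f a = f z₀ := (hFF' ha).2
    have hb' : f b = f z₀ := (hFF' hb).2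
    have hab2 : a = b + d := by rw [hd]; abel
    rw [hab2, map_add, hfd] at ha'
    linarith
  obtain ⟨e, he⟩ := hFne
  refine ⟨e, hFC he, ?_⟩
  intro n hn xs ms hxs hms hsum i
  exact hsingle _ (hFface n hn e xs ms he hxs hms hsum i) _ he
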